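/- Let X and Y be vector spaces over ℝ and let f : X → Y satisfy: (i) for every line L ⊆ X, the image f '' L is either a point or a line in Y, and (ii) for every line L ⊆ X, if f '' L is a line in Y then the restriction of f to L is injective. If L₀, L₁ ⊆ X are lines that are parallel to each other and both images f '' L₀ and f '' L₁ are lines in Y, then f '' L₀ and f '' L₁ are parallel to each other. -/

import Mathlib

def IsLine {X : Type*} [AddCommGroup X] [Module ℝ X] (L : Set X) : Prop :=
  ∃ o d : X, d ≠ 0 ∧ L = {x | ∃ r : ℝ, x = r • d + o}

def IsPlane {X : Type*} [AddCommGroup X] [Module ℝ X] (E : Set X) : Prop :=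
  ∃ o d₁ d₂ : X, (∀ r s : ℝ, r • d₁ + s • d₂ = 0 → r = 0 ∧ s = 0) ∧
    E = {x | ∃ r s : ℝ, x = r • d₁ + s • d₂ + o}

def IsPoint {X : Type*} (S : Set X) : Prop := ∃ p : X, S = {p}

/-- Two lines are parallel if they are equal or lie in a common plane and are disjoint. -/
def AreParallel {X : Type*} [AddCommGroup X] [Module ℝ X] (L₀ L₁ : Set X) : Prop :=
  L₀ = L₁ ∨ ∃ E : Set X, IsPlane E ∧ L₀ ⊆ E ∧ L₁ ⊆ E ∧ L₀ ∩ L₁ = ∅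

section Aux

variable {X : Type*} [AddCommGroup X] [Module ℝ X]

/-- The line through two points. -/
def lineThrough (p q : X) : Set X := {x | ∃ r : ℝ, x = r • (q - p) + p}

lemma left_mem_lineThrough (p q : X) : p ∈ lineThrough p q := ⟨0, by module⟩

lemma right_mem_lineThrough (p q : X) : q ∈ lineThrough p q := ⟨1, by module⟩

lemma isLine_lineThrough {p q : X} (h : p ≠ q) : IsLine (lineThrough p q) :=
  ⟨p, q - p, sub_ne_zero.mpr (Ne.symm h), rfl⟩

lemma line_eq_lineThrough {L : Set X} (hL : IsLine L) {p q : X}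
    (hp : p ∈ L) (hq : q ∈ L) (hpq : p ≠ q) : L = lineThrough p q := by
  obtain ⟨o, d, hd, rfl⟩ := hL
  obtain ⟨a, rfl⟩ := hp
  obtain ⟨b, rfl⟩ := hq
  have hab : b - a ≠ 0 := by
    intro h
    have hba : b = a := sub_eq_zero.mp h
    exact hpq (by rw [hba])
  ext x
  simp only [lineThrough, Set.mem_setOf_eq]
  constructor
  · rintro ⟨r, rfl⟩
    refine ⟨(r - a) / (b - a), ?_⟩
    match_scalars <;> field_simp <;> ring
  · rintro ⟨t, rfl⟩
    exact ⟨t * (b - a) + a, by module⟩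

lemma line_unique {L L' : Set X} (hL : IsLine L) (hL' : IsLine L') {p q : X}
    (hpq : p ≠ q) (hp : p ∈ L) (hq : q ∈ L) (hp' : p ∈ L') (hq' : q ∈ L') : L = L' := by
  rw [line_eq_lineThrough hL hp hq hpq, line_eq_lineThrough hL' hp' hq' hpq]

lemma lineThrough_subset_plane {o d₁ d₂ : X} {p q : X}
    (hp : p ∈ {x : X | ∃ r s : ℝ, x = r • d₁ + s • d₂ + o})
    (hq : q ∈ {x : X | ∃ r s : ℝ, x = r • d₁ + s • d₂ + o}) :
    lineThrough p q ⊆ {x : X | ∃ r s : ℝ, x = r • d₁ + s • d₂ + o} := by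
  obtain ⟨r₁, s₁, rfl⟩ := hp
  obtain ⟨r₂, s₂, rfl⟩ := hq
  rintro x ⟨t, rfl⟩
  exact ⟨r₁ + t * (r₂ - r₁), s₁ + t * (s₂ - s₁), by module⟩

/-- scalar solving lemma -/
lemma solve2 {p q p' q' : ℝ} (hdet : p * q' - p' * q ≠ 0) (α β : ℝ) :
    ∃ lam mu : ℝ, lam * p + mu * p' = α ∧ lam * q + mu * q' = β := by
  refine ⟨(α * q' - β * p') / (p * q' - p' * q), (β * p - α * q) / (p * q' - p' * q), ?_, ?_⟩
  · rw [div_mul_eq_mul_div, div_mul_eq_mul_div, ← add_div, div_eq_iff hdet]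
    ring
  · rw [div_mul_eq_mul_div, div_mul_eq_mul_div, ← add_div, div_eq_iff hdet]
    ring

lemma prop_of_det_zero {p q p' q' : ℝ} {u v d₀ d₁ : X}
    (h0 : d₀ = p • u + q • v) (h1 : d₁ = p' • u + q' • v) (hd₀ : d₀ ≠ 0)
    (hdet0 : p * q' - p' * q = 0) : ∃ c : ℝ, d₁ = c • d₀ := by
  by_cases hp0 : p = 0
  · have hq0 : q ≠ 0 := by
      intro h
      exact hd₀ (by rw [h0, hp0, h]; module)
    have hp'0 : p' = 0 := by
      rw [hp0] at hdet0
      have : p' * q = 0 := by linarith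
      rcases mul_eq_zero.mp this with h | h
      · exact h
      · exact absurd h hq0
    refine ⟨q' / q, ?_⟩
    rw [h0, h1, hp0, hp'0]
    match_scalars <;> field_simp <;> ring
  · refine ⟨p' / p, ?_⟩
    rw [h0, h1]
    match_scalars
    · field_simp
    · rw [div_mul_eq_mul_div, eq_comm, div_eq_iff hp0]
      linear_combination -hdet0


/-- Two disjoint coplanar lines have a common direction. -/
lemma parallel_structure {L₀ L₁ : Set X} (hL₀ : IsLine L₀) (hL₁ : IsLine L₁)
    {E : Set X} (hE : IsPlane E) (h₀ : L₀ ⊆ E) (h₁ : L₁ ⊆ E) (hdisj : L₀ ∩ L₁ = ∅) :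
    ∃ d o₀ o₁ : X, d ≠ 0 ∧ L₀ = {x | ∃ r : ℝ, x = r • d + o₀} ∧
      L₁ = {x | ∃ r : ℝ, x = r • d + o₁} := by
  obtain ⟨o, u, v, hind, rfl⟩ := hE
  obtain ⟨o₀, d₀, hd₀, rfl⟩ := hL₀
  obtain ⟨o₁, d₁, hd₁, rfl⟩ := hL₁
  have hnb : ∀ x : X, (∃ r : ℝ, x = r • d₀ + o₀) → (∃ r : ℝ, x = r • d₁ + o₁) → False :=
    fun x hx hy => (Set.eq_empty_iff_forall_notMem.mp hdisj x) ⟨hx, hy⟩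
  have ho₀m : o₀ ∈ {x : X | ∃ r : ℝ, x = r • d₀ + o₀} := ⟨0, by module⟩
  have hd₀m : d₀ + o₀ ∈ {x : X | ∃ r : ℝ, x = r • d₀ + o₀} := ⟨1, by module⟩
  have ho₁m : o₁ ∈ {x : X | ∃ r : ℝ, x = r • d₁ + o₁} := ⟨0, by module⟩
  have hd₁m : d₁ + o₁ ∈ {x : X | ∃ r : ℝ, x = r • d₁ + o₁} := ⟨1, by module⟩
  obtain ⟨a₀, b₀, ho₀⟩ := h₀ ho₀m
  obtain ⟨a₁, b₁, hm₁⟩ := h₀ hd₀m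
  obtain ⟨a₀', b₀', ho₁⟩ := h₁ ho₁m
  obtain ⟨a₁', b₁', hm₁'⟩ := h₁ hd₁m
  obtain ⟨p, q, hd₀uv⟩ : ∃ p q : ℝ, d₀ = p • u + q • v := by
    refine ⟨a₁ - a₀, b₁ - b₀, ?_⟩
    calc d₀ = (d₀ + o₀) - o₀ := by abel
    _ = (a₁ • u + b₁ • v + o) - (a₀ • u + b₀ • v + o) := by rw [← hm₁, ← ho₀]
    _ = (a₁ - a₀) • u + (b₁ - b₀) • v := by module
  obtain ⟨p', q', hd₁uv⟩ : ∃ p' q' : ℝ, d₁ = p' • u + q' • v := by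
    refine ⟨a₁' - a₀', b₁' - b₀', ?_⟩
    calc d₁ = (d₁ + o₁) - o₁ := by abel
    _ = (a₁' • u + b₁' • v + o) - (a₀' • u + b₀' • v + o) := by rw [← hm₁', ← ho₁]
    _ = (a₁' - a₀') • u + (b₁' - b₀') • v := by module
  obtain ⟨α, β, hw⟩ : ∃ α β : ℝ, o₁ - o₀ = α • u + β • v := by
    refine ⟨a₀' - a₀, b₀' - b₀, ?_⟩
    calc o₁ - o₀ = (a₀' • u + b₀' • v + o) - (a₀ • u + b₀ • v + o) := by rw [← ho₁, ← ho₀]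
    _ = (a₀' - a₀) • u + (b₀' - b₀) • v := by module
  by_cases hc : ∃ c : ℝ, d₁ = c • d₀
  · obtain ⟨c, hc⟩ := hc
    have hcne : c ≠ 0 := by
      rintro rfl
      rw [zero_smul] at hc
      exact hd₁ hc
    refine ⟨d₀, o₀, o₁, hd₀, rfl, ?_⟩
    ext x
    simp only [Set.mem_setOf_eq]
    constructor
    · rintro ⟨r, rfl⟩
      exact ⟨r * c, by rw [hc]; module⟩
    · rintro ⟨r, rfl⟩
      exact ⟨r / c, by rw [hc, smul_smul, div_mul_cancel₀ r hcne]⟩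
  · exfalso
    have hdet : p * q' - p' * q ≠ 0 := by
      intro hdet0
      exact hc (prop_of_det_zero hd₀uv hd₁uv hd₀ hdet0)
    obtain ⟨lam, mu, hl1, hl2⟩ := solve2 hdet α β
    have key : lam • d₀ + mu • d₁ = o₁ - o₀ := by
      rw [hd₀uv, hd₁uv, hw]
      match_scalars
      · linear_combination hl1
      · linear_combination hl2
    apply hnb (lam • d₀ + o₀) ⟨lam, rfl⟩
    refine ⟨-mu, ?_⟩
    have h' : lam • d₀ = o₁ - o₀ - mu • d₁ := by rw [← key]; abel
    rw [h', neg_smul]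
    abel

end Aux

theorem image_of_parallel_lines
    {X Y : Type*} [AddCommGroup X] [Module ℝ X] [AddCommGroup Y] [Module ℝ Y]
    (f : X → Y)
    (h1 : ∀ L : Set X, IsLine L → IsPoint (f '' L) ∨ IsLine (f '' L))
    (h2 : ∀ L : Set X, IsLine L → IsLine (f '' L) → Set.InjOn f L)
    (L₀ L₁ : Set X) (hL₀ : IsLine L₀) (hL₁ : IsLine L₁)
    (hpar : AreParallel L₀ L₁)
    (hfL₀ : IsLine (f '' L₀)) (hfL₁ : IsLine (f '' L₁)) :
    AreParallel (f '' L₀) (f '' L₁) := by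
  rcases hpar with heq | ⟨E, hE, hsub₀, hsub₁, hdisjX⟩
  · left; rw [heq]
  obtain ⟨d, o₀, o₁, hd, hL₀eq, hL₁eq⟩ := parallel_structure hL₀ hL₁ hE hsub₀ hsub₁ hdisjX
  subst hL₀eq hL₁eq
  have hnb : ∀ x : X, (∃ r : ℝ, x = r • d + o₀) → (∃ r : ℝ, x = r • d + o₁) → False :=
    fun x hx hy => (Set.eq_empty_iff_forall_notMem.mp hdisjX x) ⟨hx, hy⟩
  -- injectivity on the two lines
  have hinj₀ := h2 _ hL₀ hfL₀
  have hinj₁ := h2 _ hL₁ hfL₁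
  -- helper: an image of a line containing two distinct points is a line
  have imgLine : ∀ M : Set X, IsLine M → ∀ y z : Y, y ∈ f '' M → z ∈ f '' M → y ≠ z →
      IsLine (f '' M) := by
    intro M hM y z hy hz hyz
    rcases h1 M hM with ⟨pt, hpt⟩ | h
    · exfalso
      rw [hpt, Set.mem_singleton_iff] at hy hz
      exact hyz (hy.trans hz.symm)
    · exact h
  rcases Set.eq_empty_or_nonempty ((f '' {x | ∃ r : ℝ, x = r • d + o₀}) ∩
      (f '' {x | ∃ r : ℝ, x = r • d + o₁})) with hdisjY | ⟨y, ⟨a, ha, hfa⟩, ⟨b, hb, hfb⟩⟩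
  · -- disjoint images: construct a common plane
    right
    have hnbY : ∀ u : Y, u ∈ f '' {x | ∃ r : ℝ, x = r • d + o₀} →
        u ∈ f '' {x | ∃ r : ℝ, x = r • d + o₁} → False :=
      fun u hu hv => (Set.eq_empty_iff_forall_notMem.mp hdisjY u) ⟨hu, hv⟩
    have ho₀mem : o₀ ∈ {x : X | ∃ r : ℝ, x = r • d + o₀} := ⟨0, by module⟩
    have hd₀mem : d + o₀ ∈ {x : X | ∃ r : ℝ, x = r • d + o₀} := ⟨1, by module⟩
    have ho₁mem : o₁ ∈ {x : X | ∃ r : ℝ, x = r • d + o₁} := ⟨0, by module⟩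
    set y₀ := f o₀ with hy₀
    set y₁ := f (d + o₀) with hy₁
    set z₀ := f o₁ with hz₀def
    have hy₀img : y₀ ∈ f '' {x | ∃ r : ℝ, x = r • d + o₀} := ⟨o₀, ho₀mem, rfl⟩
    have hy₁img : y₁ ∈ f '' {x | ∃ r : ℝ, x = r • d + o₀} := ⟨d + o₀, hd₀mem, rfl⟩
    have hz₀img : z₀ ∈ f '' {x | ∃ r : ℝ, x = r • d + o₁} := ⟨o₁, ho₁mem, rfl⟩
    have hy01 : y₀ ≠ y₁ := by
      intro h
      have : o₀ = d + o₀ := hinj₀ ho₀mem hd₀mem h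
      exact hd (by
        have := this.symm
        rwa [add_eq_right] at this)
    have himg₀ : f '' {x | ∃ r : ℝ, x = r • d + o₀} = lineThrough y₀ y₁ :=
      line_eq_lineThrough hfL₀ hy₀img hy₁img hy01
    set e₁ := y₁ - y₀ with he₁
    set e₂ := z₀ - y₀ with he₂
    have he₁ne : e₁ ≠ 0 := sub_ne_zero.mpr hy01.symm
    have hz₀not : z₀ ∉ f '' {x | ∃ r : ℝ, x = r • d + o₀} := fun h => hnbY z₀ h hz₀img
    have indep : ∀ r s : ℝ, r • e₁ + s • e₂ = 0 → r = 0 ∧ s = 0 := by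
      intro r s h
      by_cases hs : s = 0
      · refine ⟨?_, hs⟩
        rw [hs, zero_smul, add_zero] at h
        rcases smul_eq_zero.mp h with h' | h'
        · exact h'
        · exact absurd h' he₁ne
      · exfalso
        apply hz₀not
        rw [himg₀]
        refine ⟨-(r / s), ?_⟩
        have hse : s • e₂ = s • ((-(r / s)) • e₁) := by
          rw [smul_smul]
          have : s * -(r / s) = -r := by field_simp
          rw [this, neg_smul, eq_neg_iff_add_eq_zero, add_comm]
          exact h
        have he2 : e₂ = (-(r / s)) • e₁ := smul_right_injective Y hs hse
        rw [← he2, he₂]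
        abel
    refine ⟨{x : Y | ∃ r s : ℝ, x = r • e₁ + s • e₂ + y₀}, ⟨y₀, e₁, e₂, indep, rfl⟩, ?_, ?_, hdisjY⟩
    · rw [himg₀]
      rintro x ⟨t, rfl⟩
      exact ⟨t, 0, by module⟩
    · rintro x ⟨bb, ⟨s, rfl⟩, rfl⟩
      by_cases hs : s = 0
      · subst hs
        rw [zero_smul, zero_add]
        exact ⟨0, 1, by module⟩
      · -- transversal construction
        have hy₀P : y₀ ∈ {x : Y | ∃ r s : ℝ, x = r • e₁ + s • e₂ + y₀} := ⟨0, 0, by module⟩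
        have hz₀P : z₀ ∈ {x : Y | ∃ r s : ℝ, x = r • e₁ + s • e₂ + y₀} := ⟨0, 1, by module⟩
        have hgsmem : s • d + o₀ ∈ {x : X | ∃ r : ℝ, x = r • d + o₀} := ⟨s, rfl⟩
        have hbmem : s • d + o₁ ∈ {x : X | ∃ r : ℝ, x = r • d + o₁} := ⟨s, rfl⟩
        set c : X := (s / 2) • d + (2⁻¹ : ℝ) • (o₁ - o₀) + o₀ with hc
        have hcD : c ∈ lineThrough o₀ (s • d + o₁) := ⟨1/2, by rw [hc]; match_scalars <;> ring⟩
        have hcD' : c ∈ lineThrough (s • d + o₀) o₁ := ⟨1/2, by rw [hc]; match_scalars <;> ring⟩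
        have hne₁ : o₀ ≠ s • d + o₁ := by
          intro h
          exact hnb o₀ ⟨0, by module⟩ ⟨s, h⟩
        have hne₂ : s • d + o₀ ≠ o₁ := by
          intro h
          exact hnb (s • d + o₀) ⟨s, rfl⟩ ⟨0, by rw [h]; module⟩
        have hDline : IsLine (lineThrough o₀ (s • d + o₁)) := isLine_lineThrough hne₁
        have hD'line : IsLine (lineThrough (s • d + o₀) o₁) := isLine_lineThrough hne₂
        set gs := f (s • d + o₀) with hgs
        have hgsimg : gs ∈ f '' {x | ∃ r : ℝ, x = r • d + o₀} := ⟨_, hgsmem, rfl⟩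
        have hgz : gs ≠ z₀ := fun h => hnbY gs hgsimg (h ▸ hz₀img)
        have hfD' : IsLine (f '' lineThrough (s • d + o₀) o₁) :=
          imgLine _ hD'line gs z₀ ⟨_, left_mem_lineThrough _ _, rfl⟩
            ⟨_, right_mem_lineThrough _ _, rfl⟩ hgz
        have hgsP : gs ∈ {x : Y | ∃ r s : ℝ, x = r • e₁ + s • e₂ + y₀} := by
          have := hgsimg
          rw [himg₀] at this
          obtain ⟨t, ht⟩ := this
          exact ⟨t, 0, by rw [ht]; module⟩
        have hD'eq : f '' lineThrough (s • d + o₀) o₁ = lineThrough gs z₀ :=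
          line_eq_lineThrough hfD' ⟨_, left_mem_lineThrough _ _, rfl⟩
            ⟨_, right_mem_lineThrough _ _, rfl⟩ hgz
        have hfcD' : f c ∈ f '' lineThrough (s • d + o₀) o₁ := ⟨c, hcD', rfl⟩
        have hfcP : f c ∈ {x : Y | ∃ r s : ℝ, x = r • e₁ + s • e₂ + y₀} := by
          have hsub := lineThrough_subset_plane hgsP hz₀P
          rw [hD'eq] at hfcD'
          exact hsub hfcD'
        have hfcy₀ : f c ≠ y₀ := by
          intro h
          have hy₀D' : y₀ ∈ f '' lineThrough (s • d + o₀) o₁ := h ▸ hfcD'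
          have hy₀gs : y₀ ≠ gs := by
            intro h'
            have : o₀ = s • d + o₀ := hinj₀ ho₀mem hgsmem h'
            apply hs
            have h'' : s • d = 0 := by
              have := this.symm
              rwa [add_eq_right] at this
            rcases smul_eq_zero.mp h'' with h3 | h3
            · exact h3
            · exact absurd h3 hd
          have heqD' : f '' lineThrough (s • d + o₀) o₁ = f '' {x | ∃ r : ℝ, x = r • d + o₀} :=
            line_unique hfD' hfL₀ hy₀gs hy₀D'
              ⟨_, left_mem_lineThrough _ _, rfl⟩ hy₀img hgsimg
          apply hz₀not
          rw [← heqD']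
          exact ⟨_, right_mem_lineThrough _ _, rfl⟩
        have hximg : f (s • d + o₁) ∈ f '' {x | ∃ r : ℝ, x = r • d + o₁} := ⟨_, hbmem, rfl⟩
        have hy₀x : y₀ ≠ f (s • d + o₁) := fun h => hnbY y₀ hy₀img (h ▸ hximg)
        have hfD : IsLine (f '' lineThrough o₀ (s • d + o₁)) :=
          imgLine _ hDline y₀ (f (s • d + o₁)) ⟨_, left_mem_lineThrough _ _, rfl⟩
            ⟨_, right_mem_lineThrough _ _, rfl⟩ hy₀x
        have hDeq : f '' lineThrough o₀ (s • d + o₁) = lineThrough y₀ (f c) :=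
          line_eq_lineThrough hfD ⟨_, left_mem_lineThrough _ _, rfl⟩
            ⟨c, hcD, rfl⟩ hfcy₀.symm.symm.symm
        have hxD : f (s • d + o₁) ∈ f '' lineThrough o₀ (s • d + o₁) :=
          ⟨_, right_mem_lineThrough _ _, rfl⟩
        rw [hDeq] at hxD
        exact lineThrough_subset_plane hy₀P hfcP hxD
  · -- images intersect: show they are equal
    left
    obtain ⟨r₀, rfl⟩ := ha
    obtain ⟨s₀, rfl⟩ := hb
    set a := r₀ • d + o₀ with hadef
    set b := s₀ • d + o₁ with hbdef
    have hamem : a ∈ {x : X | ∃ r : ℝ, x = r • d + o₀} := ⟨r₀, rfl⟩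
    have hbmem : b ∈ {x : X | ∃ r : ℝ, x = r • d + o₁} := ⟨s₀, rfl⟩
    have hab : a ≠ b := by
      intro h
      exact hnb a ⟨r₀, rfl⟩ ⟨s₀, h⟩
    have hwd : ∀ c : ℝ, b - a ≠ c • d := by
      intro c h
      apply hnb b ⟨c + r₀, ?_⟩ ⟨s₀, rfl⟩
      have : b = c • d + a := by rw [← h]; abel
      rw [this, hadef]
      module
    -- midpoint maps to y
    have hMline : IsLine (lineThrough a b) := isLine_lineThrough hab
    have hfM : f '' lineThrough a b = {y} := by
      rcases h1 _ hMline with ⟨pt, hpt⟩ | hl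
      · have : y = pt := by
          have : f a ∈ f '' lineThrough a b := ⟨a, left_mem_lineThrough _ _, rfl⟩
          rw [hpt, Set.mem_singleton_iff] at this
          rw [← hfa, this]
        rw [hpt, this]
      · exfalso
        have hinjM := h2 _ hMline hl
        exact hab (hinjM (left_mem_lineThrough a b) (right_mem_lineThrough a b)
          (by rw [hfa, hfb]))
    set m : X := (2⁻¹ : ℝ) • (b - a) + a with hm
    have hmM : m ∈ lineThrough a b := ⟨2⁻¹, rfl⟩
    have hfm : f m = y := by
      have : f m ∈ f '' lineThrough a b := ⟨m, hmM, rfl⟩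
      rwa [hfM, Set.mem_singleton_iff] at this
    set a₁ : X := d + a with ha₁
    set b' : X := b - d with hb'
    have ha₁mem : a₁ ∈ {x : X | ∃ r : ℝ, x = r • d + o₀} := ⟨r₀ + 1, by rw [ha₁, hadef]; module⟩
    have hb'mem : b' ∈ {x : X | ∃ r : ℝ, x = r • d + o₁} := ⟨s₀ - 1, by rw [hb', hbdef]; module⟩
    have ha₁b' : a₁ ≠ b' := by
      intro h
      apply hwd 2
      have : b - a = d + d := by
        rw [ha₁, hb'] at h
        have := h.symm
        rw [sub_eq_iff_eq_add] at this
        rw [this]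
        abel
      rw [this, two_smul]
    have hmR : m ∈ lineThrough a₁ b' := by
      refine ⟨2⁻¹, ?_⟩
      rw [hm, ha₁, hb']
      match_scalars <;> ring
    set y₁ := f a₁ with hy₁def
    have hy₁y : y₁ ≠ y := by
      intro h
      have : a₁ = a := hinj₀ ha₁mem hamem (by rw [← hy₁def, h, ← hfa])
      apply hd
      rw [ha₁] at this
      rwa [add_eq_right] at this
    have hfRline : IsLine (f '' lineThrough a₁ b') :=
      imgLine _ (isLine_lineThrough ha₁b') y₁ y ⟨a₁, left_mem_lineThrough _ _, rfl⟩
        ⟨m, hmR, hfm⟩ hy₁y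
    have hReq : f '' lineThrough a₁ b' = f '' {x | ∃ r : ℝ, x = r • d + o₀} :=
      line_unique hfRline hfL₀ hy₁y ⟨a₁, left_mem_lineThrough _ _, rfl⟩ ⟨m, hmR, hfm⟩
        ⟨a₁, ha₁mem, rfl⟩ ⟨a, hamem, hfa⟩
    set z := f b' with hzdef
    have hzimg₀ : z ∈ f '' {x | ∃ r : ℝ, x = r • d + o₀} := by
      rw [← hReq]
      exact ⟨b', right_mem_lineThrough _ _, rfl⟩
    have hzimg₁ : z ∈ f '' {x | ∃ r : ℝ, x = r • d + o₁} := ⟨b', hb'mem, rfl⟩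
    have hzy : z ≠ y := by
      intro h
      have : b' = b := hinj₁ hb'mem hbmem (by rw [← hzdef, h, ← hfb])
      apply hd
      rw [hb'] at this
      exact sub_eq_self.mp this
    exact line_unique hfL₀ hfL₁ (Ne.symm hzy) ⟨a, hamem, hfa⟩ hzimg₀ ⟨b, hbmem, hfb⟩ hzimg₁
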